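/- For all reals a > 0 and b ≥ 0, the first-order Marcum Q-function satisfies Q₁(a,b) = exp(−(a²/2 + b²/2)) · Φ₃(1, 1; a²/2, a²b²/4). -/

import Mathlib

open MeasureTheory Real Finset

/-- Modified Bessel function of the first kind of nonnegative integer order. -/
noncomputable def besselI (n : ℕ) (x : ℝ) : ℝ :=
  ∑' k : ℕ, (x / 2) ^ (2 * k + n) / (k.factorial * (k + n).factorial)

/-- Generalized Marcum Q-function of positive integer order `m`. -/
noncomputable def marcumQ (m : ℕ) (a b : ℝ) : ℝ :=
  a ^ (-((m : ℤ) - 1)) *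
    ∫ x in Set.Ioi b, x ^ m * Real.exp (-(x ^ 2 + a ^ 2) / 2) * besselI (m - 1) (a * x)

/-- The confluent hypergeometric (Horn) function of two variables `Φ₃`. -/
noncomputable def Phi3 (b c x y : ℝ) : ℝ :=
  ∑' j : ℕ, ∑' n : ℕ,
    (ascPochhammer ℝ j).eval b /
      ((ascPochhammer ℝ (j + n)).eval c * (j.factorial : ℝ) * (n.factorial : ℝ)) *
      x ^ j * y ^ n

section MarcumAux

open Set Filter Topology

lemma integrableOn_pow_exp (n : ℕ) {b : ℝ} (hb : 0 ≤ b) :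
    IntegrableOn (fun x : ℝ => x ^ n * Real.exp (-x ^ 2 / 2)) (Set.Ioi b) := by
  have h := integrableOn_rpow_mul_exp_neg_mul_sq (b := (2:ℝ)⁻¹) (by norm_num) (s := (n : ℝ))
    (by exact_mod_cast neg_one_lt_zero.trans_le (Nat.cast_nonneg n))
  have h2 : IntegrableOn (fun x : ℝ => x ^ n * Real.exp (-x ^ 2 / 2)) (Set.Ioi 0) := by
    refine h.congr_fun (fun x hx => ?_) measurableSet_Ioi
    simp only [Real.rpow_natCast]
    ring_nf
  exact h2.mono_set (Set.Ioi_subset_Ioi hb)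

lemma tendsto_pow_exp_zero (n : ℕ) :
    Tendsto (fun x : ℝ => x ^ n * Real.exp (-x ^ 2 / 2)) atTop (𝓝 0) := by
  have h := rpow_mul_exp_neg_mul_sq_isLittleO_exp_neg (b := (2:ℝ)⁻¹) (by norm_num) (n : ℝ)
  have h2 : (fun x : ℝ => x ^ n * Real.exp (-x ^ 2 / 2)) =ᶠ[atTop]
      fun x : ℝ => x ^ (n : ℝ) * Real.exp (-(2:ℝ)⁻¹ * x ^ 2) := by
    filter_upwards [eventually_gt_atTop 0] with x hx
    rw [Real.rpow_natCast]
    ring_nf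
  have h3 : Tendsto (fun x : ℝ => Real.exp (-(1/2) * x)) atTop (𝓝 0) := by
    have h4 : Tendsto (fun x : ℝ => -(1/2) * x) atTop atBot :=
      Filter.Tendsto.const_mul_atTop_of_neg (by norm_num) tendsto_id
    exact Real.tendsto_exp_atBot.comp h4
  exact Tendsto.congr' h2.symm ((h.isBigO.trans_tendsto h3))

lemma hasDerivAt_aux (m : ℕ) (x : ℝ) :
    HasDerivAt (fun x : ℝ => -(x ^ (m + 1) * Real.exp (-x ^ 2 / 2)))
      (x ^ (m + 2) * Real.exp (-x ^ 2 / 2) - (m + 1) * x ^ m * Real.exp (-x ^ 2 / 2)) x := by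
  have h1 : HasDerivAt (fun x : ℝ => x ^ (m + 1)) ((m + 1) * x ^ m) x := by
    simpa using hasDerivAt_pow (m + 1) x
  have h2 : HasDerivAt (fun x : ℝ => Real.exp (-x ^ 2 / 2)) (-x * Real.exp (-x ^ 2 / 2)) x := by
    have h3 : HasDerivAt (fun x : ℝ => -x ^ 2 / 2) (-x) x := by
      have := (hasDerivAt_pow 2 x).neg.div_const 2
      simpa using this.congr_deriv (by ring)
    simpa [mul_comm] using h3.exp
  have := (h1.mul h2).neg
  convert this using 1
  · rfl
  · ext y; simp
  · ext y; simp
  · ring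

lemma step_int (m : ℕ) {b : ℝ} (hb : 0 ≤ b) :
    ∫ x in Set.Ioi b, x ^ (m + 2) * Real.exp (-x ^ 2 / 2) =
      b ^ (m + 1) * Real.exp (-b ^ 2 / 2) +
        (m + 1) * ∫ x in Set.Ioi b, x ^ m * Real.exp (-x ^ 2 / 2) := by
  have hint : IntegrableOn (fun x : ℝ => x ^ (m + 2) * Real.exp (-x ^ 2 / 2) -
      ((m : ℝ) + 1) * x ^ m * Real.exp (-x ^ 2 / 2)) (Set.Ioi b) := by
    have h1 := integrableOn_pow_exp (m + 2) hb
    have h2 := (integrableOn_pow_exp m hb).const_mul ((m : ℝ) + 1)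
    simpa [mul_assoc, Pi.sub_def] using h1.sub h2
  have key := integral_Ioi_of_hasDerivAt_of_tendsto' (a := b)
    (f := fun x : ℝ => -(x ^ (m + 1) * Real.exp (-x ^ 2 / 2)))
    (f' := fun x => x ^ (m + 2) * Real.exp (-x ^ 2 / 2) - ((m : ℝ) + 1) * x ^ m * Real.exp (-x ^ 2 / 2))
    (fun x _ => by simpa using hasDerivAt_aux m x)
    hint
    (by simpa using (tendsto_pow_exp_zero (m + 1)).neg)
  have h1 := integrableOn_pow_exp (m + 2) hb
  have h2 : IntegrableOn (fun x : ℝ => ((m : ℝ) + 1) * x ^ m * Real.exp (-x ^ 2 / 2))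
      (Set.Ioi b) := by
    simpa [mul_assoc, IntegrableOn] using (integrableOn_pow_exp m hb).const_mul ((m : ℝ) + 1)
  rw [integral_sub h1 h2] at key
  have h3 : ∫ x in Set.Ioi b, ((m : ℝ) + 1) * x ^ m * Real.exp (-x ^ 2 / 2) =
      ((m : ℝ) + 1) * ∫ x in Set.Ioi b, x ^ m * Real.exp (-x ^ 2 / 2) := by
    simp_rw [mul_assoc]
    rw [MeasureTheory.integral_const_mul]
  rw [h3] at key
  linarith [key]

lemma base_int {b : ℝ} (hb : 0 ≤ b) :
    ∫ x in Set.Ioi b, x ^ 1 * Real.exp (-x ^ 2 / 2) = Real.exp (-b ^ 2 / 2) := by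
  have key := integral_Ioi_of_hasDerivAt_of_tendsto' (a := b)
    (f := fun x : ℝ => -(Real.exp (-x ^ 2 / 2)))
    (f' := fun x => x ^ 1 * Real.exp (-x ^ 2 / 2))
    (fun x _ => by
      have h3 : HasDerivAt (fun x : ℝ => -x ^ 2 / 2) (-x) x := by
        have := (hasDerivAt_pow 2 x).neg.div_const 2
        simpa using this.congr_deriv (by ring)
      simpa [mul_comm, Pi.neg_def] using h3.exp.neg.congr_deriv (by ring))
    (integrableOn_pow_exp 1 hb)
    (by simpa using (tendsto_pow_exp_zero 0).neg.congr (by simp))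
  simpa using key

lemma J_int (k : ℕ) {b : ℝ} (hb : 0 ≤ b) :
    ∫ x in Set.Ioi b, x ^ (2 * k + 1) * Real.exp (-x ^ 2 / 2) =
      2 ^ k * k.factorial * Real.exp (-b ^ 2 / 2) *
        ∑ n ∈ Finset.range (k + 1), (b ^ 2 / 2) ^ n / n.factorial := by
  induction k with
  | zero => simpa using base_int hb
  | succ k ih =>
    have h1 : 2 * (k + 1) + 1 = (2 * k + 1) + 2 := by ring
    rw [h1, step_int (2 * k + 1) hb, ih]
    set S : ℝ := ∑ n ∈ Finset.range (k + 1), (b ^ 2 / 2) ^ n / n.factorial with hS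
    set E : ℝ := Real.exp (-b ^ 2 / 2) with hE
    rw [Finset.sum_range_succ, ← hS]
    have hfac : (k.factorial : ℝ) ≠ 0 := Nat.cast_ne_zero.mpr k.factorial_ne_zero
    have hb2 : b ^ (2 * k + 1 + 1) = (b ^ 2) ^ (k + 1) := by rw [← pow_mul]; ring_nf
    have hpow : ((b ^ 2 / 2) : ℝ) ^ (k + 1) = (b ^ 2) ^ (k + 1) / 2 ^ (k + 1) := div_pow _ _ _
    have hk1 : (((k + 1).factorial : ℕ) : ℝ) = (k + 1) * k.factorial := by
      push_cast [Nat.factorial_succ]; ring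
    rw [hb2, hpow, hk1]
    push_cast
    field_simp
    ring

lemma F_int (a : ℝ) {b : ℝ} (hb : 0 ≤ b) (k : ℕ) :
    ∫ x in Set.Ioi b, x * Real.exp (-(x ^ 2 + a ^ 2) / 2) *
        ((a * x / 2) ^ (2 * k) / (k.factorial * k.factorial)) =
      Real.exp (-(a ^ 2 / 2 + b ^ 2 / 2)) * ((a ^ 2 / 2) ^ k / k.factorial) *
        ∑ n ∈ Finset.range (k + 1), (b ^ 2 / 2) ^ n / n.factorial := by
  have hfun : ∀ x : ℝ, x * Real.exp (-(x ^ 2 + a ^ 2) / 2) *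
      ((a * x / 2) ^ (2 * k) / (k.factorial * k.factorial)) =
      (Real.exp (-a ^ 2 / 2) * ((a ^ 2 / 4) ^ k / (k.factorial * k.factorial))) *
        (x ^ (2 * k + 1) * Real.exp (-x ^ 2 / 2)) := by
    intro x
    rw [show -(x ^ 2 + a ^ 2) / 2 = -x ^ 2 / 2 + -a ^ 2 / 2 by ring, Real.exp_add]
    have e1 : (a * x / 2) ^ (2 * k) = (a ^ 2 / 4) ^ k * (x ^ 2) ^ k := by
      rw [pow_mul, show (a * x / 2) ^ 2 = a ^ 2 / 4 * x ^ 2 by ring, mul_pow]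
    have e2 : x ^ (2 * k + 1) = (x ^ 2) ^ k * x := by rw [pow_succ, pow_mul]
    rw [e1, e2]
    ring
  simp_rw [hfun]
  rw [MeasureTheory.integral_const_mul, J_int k hb]
  have hfac : (k.factorial : ℝ) ≠ 0 := Nat.cast_ne_zero.mpr k.factorial_ne_zero
  have h2 : ((a ^ 2 / 4 : ℝ)) ^ k * 2 ^ k = (a ^ 2 / 2) ^ k := by rw [← mul_pow]; congr 1; ring
  rw [show -(a ^ 2 / 2 + b ^ 2 / 2) = -a ^ 2 / 2 + -b ^ 2 / 2 by ring, Real.exp_add, ← h2]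
  field_simp

private noncomputable def gfun (A B : ℝ) : ℕ × ℕ → ℝ := fun p =>
  A ^ p.1 * (A * B) ^ p.2 / ((p.1 + p.2).factorial * p.2.factorial)

private noncomputable def hfun (A B : ℝ) : ℕ × ℕ → ℝ := fun p =>
  if p.2 ≤ p.1 then A ^ p.1 * B ^ p.2 / (p.1.factorial * p.2.factorial) else 0

private def efun : ℕ × ℕ → ℕ × ℕ := fun q => (q.1 + q.2, q.2)

private lemma efun_inj : Function.Injective efun := by
  intro ⟨j, n⟩ ⟨j', n'⟩ hq
  simp only [efun, Prod.mk.injEq] at hq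
  exact Prod.ext (by omega) hq.2

private lemma hfun_comp (A B : ℝ) (q : ℕ × ℕ) : hfun A B (efun q) = gfun A B q := by
  obtain ⟨j, n⟩ := q
  simp only [hfun, gfun, efun, le_add_iff_nonneg_left, Nat.zero_le, if_true]
  rw [pow_add, mul_pow]
  ring

private lemma hfun_supp (A B : ℝ) : Function.support (hfun A B) ⊆ Set.range efun := by
  intro p hp
  rw [Function.mem_support] at hp
  by_cases hle : p.2 ≤ p.1
  · exact ⟨(p.1 - p.2, p.2), by simp only [efun]; rw [Nat.sub_add_cancel hle]⟩
  · simp [hfun, hle] at hp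

private lemma gfun_summable {A B : ℝ} (hA : 0 ≤ A) (hB : 0 ≤ B) : Summable (gfun A B) := by
  refine Summable.of_nonneg_of_le (fun p => by unfold gfun; positivity)
    (fun p => ?_)
    (Summable.mul_of_nonneg (Real.summable_pow_div_factorial A)
      (Real.summable_pow_div_factorial (A * B))
      (fun j => by positivity) (fun n => by positivity))
  obtain ⟨j, n⟩ := p
  simp only [gfun]
  rw [div_mul_div_comm]
  have hd : (j.factorial : ℝ) * n.factorial ≤ ((j + n).factorial : ℝ) * n.factorial := by
    have := Nat.factorial_le (Nat.le_add_right j n)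
    have h2 : (j.factorial : ℝ) ≤ ((j + n).factorial : ℝ) := by exact_mod_cast this
    exact mul_le_mul_of_nonneg_right h2 (Nat.cast_nonneg _)
  exact div_le_div_of_nonneg_left (by positivity) (by positivity) hd

private lemma hfun_summable {A B : ℝ} (hA : 0 ≤ A) (hB : 0 ≤ B) : Summable (hfun A B) := by
  rw [← Function.Injective.summable_iff efun_inj (by
    intro p hp
    by_contra hcon
    exact hp (hfun_supp A B hcon))]
  exact (gfun_summable hA hB).congr fun q => (hfun_comp A B q).symm

lemma rhs_eq (a b : ℝ) :
    Real.exp (-(a ^ 2 / 2 + b ^ 2 / 2)) * Phi3 1 1 (a ^ 2 / 2) (a ^ 2 * b ^ 2 / 4) =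
      ∑' k : ℕ,
        Real.exp (-(a ^ 2 / 2 + b ^ 2 / 2)) * ((a ^ 2 / 2) ^ k / k.factorial) *
          ∑ n ∈ Finset.range (k + 1), (b ^ 2 / 2) ^ n / n.factorial := by
  have hA : (0:ℝ) ≤ a ^ 2 / 2 := by positivity
  have hB : (0:ℝ) ≤ b ^ 2 / 2 := by positivity
  set A : ℝ := a ^ 2 / 2
  set B : ℝ := b ^ 2 / 2
  have hY : a ^ 2 * b ^ 2 / 4 = A * B := by simp only [A, B]; ring
  have hgsum := gfun_summable hA hB
  have hhsum := hfun_summable hA hB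
  have hPhi : Phi3 1 1 A (A * B) = ∑' p : ℕ × ℕ, gfun A B p := by
    rw [Phi3, Summable.tsum_prod' hgsum fun j => hgsum.prod_factor j]
    refine tsum_congr fun j => tsum_congr fun n => ?_
    simp only [gfun, ascPochhammer_eval_one]
    have hj : (j.factorial : ℝ) ≠ 0 := Nat.cast_ne_zero.mpr j.factorial_ne_zero
    field_simp
  have hteq : ∑' p : ℕ × ℕ, gfun A B p = ∑' p : ℕ × ℕ, hfun A B p := by
    rw [← Function.Injective.tsum_eq efun_inj (hfun_supp A B)]
    exact tsum_congr fun q => (hfun_comp A B q).symm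
  have hfiber : ∀ k : ℕ, ∑' n : ℕ, hfun A B (k, n) =
      (A ^ k / k.factorial) * ∑ n ∈ Finset.range (k + 1), B ^ n / n.factorial := by
    intro k
    rw [tsum_eq_sum (s := Finset.range (k + 1)) (fun n hn => by
      simp only [hfun]
      rw [if_neg fun hcon => hn (Finset.mem_range.mpr (Nat.lt_succ_of_le hcon))])]
    rw [Finset.mul_sum]
    refine Finset.sum_congr rfl fun n hn => ?_
    simp only [hfun]
    rw [if_pos (Nat.lt_succ_iff.mp (Finset.mem_range.mp hn))]
    have hk : (k.factorial : ℝ) ≠ 0 := Nat.cast_ne_zero.mpr k.factorial_ne_zero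
    have hn' : (n.factorial : ℝ) ≠ 0 := Nat.cast_ne_zero.mpr n.factorial_ne_zero
    field_simp
  rw [hY, hPhi, hteq, Summable.tsum_prod' hhsum fun k => hhsum.prod_factor k, ← tsum_mul_left]
  exact tsum_congr fun k => by rw [hfiber k]; ring

private noncomputable def Ffun (a : ℝ) (k : ℕ) (x : ℝ) : ℝ :=
  x * Real.exp (-(x ^ 2 + a ^ 2) / 2) * ((a * x / 2) ^ (2 * k) / (k.factorial * k.factorial))

private lemma Ffun_eq (a : ℝ) (k : ℕ) : Ffun a k = fun x =>
    (Real.exp (-a ^ 2 / 2) * ((a ^ 2 / 4) ^ k / (k.factorial * k.factorial))) *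
      (x ^ (2 * k + 1) * Real.exp (-x ^ 2 / 2)) := by
  funext x
  simp only [Ffun]
  rw [show -(x ^ 2 + a ^ 2) / 2 = -x ^ 2 / 2 + -a ^ 2 / 2 by ring, Real.exp_add]
  have e1 : (a * x / 2) ^ (2 * k) = (a ^ 2 / 4) ^ k * (x ^ 2) ^ k := by
    rw [pow_mul, show (a * x / 2) ^ 2 = a ^ 2 / 4 * x ^ 2 by ring, mul_pow]
  have e2 : x ^ (2 * k + 1) = (x ^ 2) ^ k * x := by rw [pow_succ, pow_mul]
  rw [e1, e2]
  ring

lemma lhs_eq (a b : ℝ) (hb : 0 ≤ b) :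
    marcumQ 1 a b = ∑' k : ℕ,
      Real.exp (-(a ^ 2 / 2 + b ^ 2 / 2)) * ((a ^ 2 / 2) ^ k / k.factorial) *
        ∑ n ∈ Finset.range (k + 1), (b ^ 2 / 2) ^ n / n.factorial := by
  have hB : (0:ℝ) ≤ b ^ 2 / 2 := by positivity
  have hpt : ∀ x : ℝ, x ^ 1 * Real.exp (-(x ^ 2 + a ^ 2) / 2) * besselI 0 (a * x)
      = ∑' k, Ffun a k x := by
    intro x
    rw [besselI]
    simp only [add_zero, pow_one]
    rw [← tsum_mul_left]
    exact tsum_congr fun k => by simp only [Ffun]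
  have hFint : ∀ k : ℕ, IntegrableOn (Ffun a k) (Set.Ioi b) := by
    intro k
    rw [Ffun_eq]
    exact (integrableOn_pow_exp (2 * k + 1) hb).const_mul _
  have hFnonneg : ∀ k : ℕ, ∀ x ∈ Set.Ioi b, 0 ≤ Ffun a k x := by
    intro k x hx
    have hx0 : (0:ℝ) ≤ x := le_trans hb (le_of_lt hx)
    simp only [Ffun]
    have h1 : (0:ℝ) ≤ (a * x / 2) ^ (2 * k) := by rw [pow_mul]; positivity
    positivity
  have hnorm : ∀ k : ℕ, ∫ x in Set.Ioi b, ‖Ffun a k x‖ = ∫ x in Set.Ioi b, Ffun a k x :=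
    fun k => setIntegral_congr_fun measurableSet_Ioi fun x hx =>
      Real.norm_of_nonneg (hFnonneg k x hx)
  have hFval : ∀ k : ℕ, ∫ x in Set.Ioi b, Ffun a k x =
      Real.exp (-(a ^ 2 / 2 + b ^ 2 / 2)) * ((a ^ 2 / 2) ^ k / k.factorial) *
        ∑ n ∈ Finset.range (k + 1), (b ^ 2 / 2) ^ n / n.factorial := fun k => F_int a hb k
  have hsum : Summable fun k : ℕ => ∫ x in Set.Ioi b, ‖Ffun a k x‖ := by
    refine Summable.of_nonneg_of_le (fun k => ?_) (fun k => ?_)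
      ((Real.summable_pow_div_factorial (a ^ 2 / 2)).mul_left
        (Real.exp (-(a ^ 2 / 2 + b ^ 2 / 2)) * Real.exp (b ^ 2 / 2)))
    · rw [hnorm k]
      exact setIntegral_nonneg measurableSet_Ioi (hFnonneg k)
    · rw [hnorm k, hFval k]
      have h1 : (∑ n ∈ Finset.range (k + 1), (b ^ 2 / 2) ^ n / (n.factorial : ℝ)) ≤
          Real.exp (b ^ 2 / 2) := Real.sum_le_exp_of_nonneg hB (k + 1)
      have h2 : (0:ℝ) ≤ (a ^ 2 / 2) ^ k / k.factorial := by positivity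
      calc Real.exp (-(a ^ 2 / 2 + b ^ 2 / 2)) * ((a ^ 2 / 2) ^ k / k.factorial) *
            ∑ n ∈ Finset.range (k + 1), (b ^ 2 / 2) ^ n / n.factorial
          ≤ Real.exp (-(a ^ 2 / 2 + b ^ 2 / 2)) * ((a ^ 2 / 2) ^ k / k.factorial) *
            Real.exp (b ^ 2 / 2) := by
            refine mul_le_mul_of_nonneg_left h1 (by positivity)
        _ = Real.exp (-(a ^ 2 / 2 + b ^ 2 / 2)) * Real.exp (b ^ 2 / 2) *
            ((a ^ 2 / 2) ^ k / k.factorial) := by ring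
  have hmain : (∫ x in Set.Ioi b, x ^ 1 * Real.exp (-(x ^ 2 + a ^ 2) / 2) * besselI 0 (a * x))
      = ∑' k : ℕ, ∫ x in Set.Ioi b, Ffun a k x := by
    rw [setIntegral_congr_fun measurableSet_Ioi fun x (_ : x ∈ Set.Ioi b) => hpt x]
    exact (MeasureTheory.integral_tsum_of_summable_integral_norm hFint hsum).symm
  have hm : marcumQ 1 a b =
      ∫ x in Set.Ioi b, x ^ 1 * Real.exp (-(x ^ 2 + a ^ 2) / 2) * besselI 0 (a * x) := by
    rw [marcumQ]
    simp
  rw [hm, hmain]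
  exact tsum_congr fun k => hFval k

end MarcumAux

theorem marcumQ_one_eq_Phi3 (a b : ℝ) (ha : 0 < a) (hb : 0 ≤ b) :
    marcumQ 1 a b =
      Real.exp (-(a ^ 2 / 2 + b ^ 2 / 2)) * Phi3 1 1 (a ^ 2 / 2) (a ^ 2 * b ^ 2 / 4) := by
  rw [lhs_eq a b hb, rhs_eq a b]
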